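/- Replacing, for each Reduce task T_{r,j}, its processing time p_{i,r,j} on each Reduce processor i by p'_{i,r,j} = p_{i,r,j} + Σ_{shuffle tasks in s_j^r} t_{r,k,j} yields an instance without Shuffle tasks whose optimal total weighted completion time equals that of the original Shuffle-plus-Reduce instance (where Shuffle tasks run on the same processor as and before their Reduce task). -/

import Mathlib

open MeasureTheory Finset

/-- Pairwise disjoint intervals packed into `[0, M]` have total length at most `M`. -/
lemma interval_packing {ι : Type*} (t : Finset ι) (a f : ι → ℝ) (M : ℝ)
    (hM0 : 0 ≤ M)
    (hf : ∀ i ∈ t, 0 ≤ f i) (ha : ∀ i ∈ t, 0 ≤ a i)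
    (hE : ∀ i ∈ t, a i + f i ≤ M)
    (hd : ∀ i ∈ t, ∀ j ∈ t, i ≠ j → a i + f i ≤ a j ∨ a j + f j ≤ a i) :
    ∑ i ∈ t, f i ≤ M := by
  have hdisj : (t : Set ι).PairwiseDisjoint (fun i => Set.Ioc (a i) (a i + f i)) := by
    intro i hi j hj hij
    rcases hd i hi j hj hij with h | h
    · rw [Function.onFun, Set.Ioc_disjoint_Ioc]
      exact le_max_of_le_right ((min_le_left _ _).trans h)
    · rw [Function.onFun, Set.Ioc_disjoint_Ioc]
      exact le_max_of_le_left ((min_le_right _ _).trans h)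
  have key : ENNReal.ofReal (∑ i ∈ t, f i) ≤ ENNReal.ofReal M := by
    rw [ENNReal.ofReal_sum_of_nonneg hf]
    calc ∑ i ∈ t, ENNReal.ofReal (f i)
        = ∑ i ∈ t, volume (Set.Ioc (a i) (a i + f i)) := by
          refine Finset.sum_congr rfl fun i _ => ?_
          rw [Real.volume_Ioc, add_sub_cancel_left]
      _ = volume (⋃ i ∈ t, Set.Ioc (a i) (a i + f i)) :=
          (measure_biUnion_finset hdisj (fun i _ => measurableSet_Ioc)).symm
      _ ≤ volume (Set.Ioc 0 M) := by
          refine measure_mono (Set.iUnion₂_subset fun i hi => ?_)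
          exact Set.Ioc_subset_Ioc (ha i hi) (hE i hi)
      _ = ENNReal.ofReal M := by rw [Real.volume_Ioc, sub_zero]
  exact (ENNReal.ofReal_le_ofReal_iff hM0).mp key

/-- Absorbing the Shuffle tasks into their Reduce tasks (increasing each Reduce
processing time p(i,r) by the total transfer time of its Shuffle tasks) yields an
instance without Shuffle tasks whose optimal total weighted completion time equals
that of the original Shuffle-plus-Reduce instance, where each Shuffle task runs on
the same processor as, and completes before, its Reduce task.  Equality of optima
is expressed by: for every value V, some feasible original schedule has objective
at most V iff some feasible merged schedule has objective at most V. -/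
theorem absorb_shuffle_optima
    (R Sh P : Type*) [Fintype R] [Fintype Sh] [DecidableEq R] [DecidableEq P]
    (owner : Sh → R)                 -- the Reduce task of each Shuffle task
    (p : P → R → ℝ) (hp : ∀ i r, 0 ≤ p i r)      -- Reduce processing times
    (tt : Sh → ℝ) (htt : ∀ s, 0 ≤ tt s)          -- Shuffle transfer times
    (q : R → ℝ)
    (hq : ∀ r, q r = ∑ s ∈ Finset.univ.filter (fun s => owner s = r), tt s)
    (w : R → ℝ) (hw : ∀ r, 0 ≤ w r)              -- weights
    (V : ℝ) :
    -- original instance: Reduce tasks and Shuffle tasks, Shuffle tasks on the same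
    -- processor as their Reduce task, completing before it starts
    (∃ (A : R → P) (SR : R → ℝ) (SS : Sh → ℝ),
      (∀ r, 0 ≤ SR r) ∧ (∀ s, 0 ≤ SS s) ∧
      -- no two Reduce tasks overlap on a common processor
      (∀ r1 r2, r1 ≠ r2 → A r1 = A r2 →
        SR r1 + p (A r1) r1 ≤ SR r2 ∨ SR r2 + p (A r2) r2 ≤ SR r1) ∧
      -- no two Shuffle tasks overlap on a common processor
      (∀ s1 s2, s1 ≠ s2 → A (owner s1) = A (owner s2) →
        SS s1 + tt s1 ≤ SS s2 ∨ SS s2 + tt s2 ≤ SS s1) ∧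
      -- Shuffle and Reduce tasks on a common processor do not overlap
      (∀ s r, A (owner s) = A r →
        SS s + tt s ≤ SR r ∨ SR r + p (A r) r ≤ SS s) ∧
      -- each Shuffle task completes before its Reduce task starts
      (∀ s, SS s + tt s ≤ SR (owner s)) ∧
      ∑ r, w r * (SR r + p (A r) r) ≤ V)
    ↔
    -- merged instance: Reduce tasks with processing times p' = p + q only
    (∃ (A : R → P) (S : R → ℝ),
      (∀ r, 0 ≤ S r) ∧
      (∀ r1 r2, r1 ≠ r2 → A r1 = A r2 →
        S r1 + (p (A r1) r1 + q r1) ≤ S r2 ∨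
        S r2 + (p (A r2) r2 + q r2) ≤ S r1) ∧
      ∑ r, w r * (S r + (p (A r) r + q r)) ≤ V) := by
  classical
  have hq0 : ∀ r, 0 ≤ q r := fun r => by
    rw [hq r]; exact Finset.sum_nonneg fun s _ => htt s
  constructor
  · -- forward: absorb shuffles into reduce tasks
    rintro ⟨A, SR, SS, hSR0, hSS0, hRR, hSSd, hSRd, hbefore, hobj⟩
    set C : R → ℝ := fun r => SR r + p (A r) r with hCdef
    set ord : R → ℕ := fun r => (Fintype.equivFin R r : ℕ) with hord
    have hordinj : Function.Injective ord := fun a b h =>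
      (Fintype.equivFin R).injective (Fin.val_injective h)
    set klt : R → R → Prop :=
      fun r1 r2 => C r1 < C r2 ∨ (C r1 = C r2 ∧ ord r1 < ord r2) with hklt
    have kirr : ∀ r, ¬ klt r r := by
      intro r h
      rcases h with h | ⟨_, h⟩ <;> exact lt_irrefl _ h
    have ktrans : ∀ {a b c}, klt a b → klt b c → klt a c := by
      rintro a b c (h1 | ⟨h1, h1'⟩) (h2 | ⟨h2, h2'⟩)
      · exact Or.inl (h1.trans h2)
      · exact Or.inl (h2 ▸ h1)
      · exact Or.inl (h1 ▸ h2)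
      · exact Or.inr ⟨h1.trans h2, h1'.trans h2'⟩
    have ktot : ∀ {a b : R}, a ≠ b → klt a b ∨ klt b a := by
      intro a b hab
      rcases lt_trichotomy (C a) (C b) with h | h | h
      · exact Or.inl (Or.inl h)
      · rcases (hordinj.ne hab).lt_or_gt with h' | h'
        · exact Or.inl (Or.inr ⟨h, h'⟩)
        · exact Or.inr (Or.inr ⟨h.symm, h'⟩)
      · exact Or.inr (Or.inl h)
    set pred : R → Finset R :=
      fun r => univ.filter (fun r' => A r' = A r ∧ klt r' r) with hpred
    have hself : ∀ r, r ∉ pred r := by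
      intro r hr
      rw [hpred, mem_filter] at hr
      exact kirr r hr.2.2
    set Sm : R → ℝ := fun r => ∑ r' ∈ pred r, (p (A r') r' + q r') with hSm
    have hpq0 : ∀ r', 0 ≤ p (A r') r' + q r' := fun r' => add_nonneg (hp _ _) (hq0 _)
    have hSm0 : ∀ r, 0 ≤ Sm r := fun r => Finset.sum_nonneg fun r' _ => hpq0 r'
    -- completion bound
    have hcomp : ∀ r, Sm r + (p (A r) r + q r) ≤ C r := by
      intro r
      set T : Finset R := univ.filter (fun r' => A r' = A r ∧ C r' ≤ C r) with hT
      have hsub : insert r (pred r) ⊆ T := by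
        intro x hx
        rw [Finset.mem_insert] at hx
        rw [hT, mem_filter]
        rcases hx with rfl | hx
        · exact ⟨mem_univ _, rfl, le_refl _⟩
        · rw [hpred, mem_filter] at hx
          refine ⟨mem_univ _, hx.2.1, ?_⟩
          rcases hx.2.2 with h | ⟨h, _⟩
          · exact le_of_lt h
          · exact le_of_eq h
      have h1 : Sm r + (p (A r) r + q r)
          = ∑ r' ∈ insert r (pred r), (p (A r') r' + q r') := by
        rw [Finset.sum_insert (hself r)]; ring
      have h2 : ∑ r' ∈ insert r (pred r), (p (A r') r' + q r')
          ≤ ∑ r' ∈ T, (p (A r') r' + q r') :=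
        Finset.sum_le_sum_of_subset_of_nonneg hsub (fun x _ _ => hpq0 x)
      -- rewrite the q-part as a sum over shuffle tasks
      set Ssh : Finset Sh := univ.filter (fun s => owner s ∈ T) with hSsh
      have hfib : ∑ r' ∈ T, q r' = ∑ s ∈ Ssh, tt s := by
        have hb : T.biUnion (fun r' => univ.filter (fun s => owner s = r')) = Ssh := by
          ext s
          simp [hSsh]
        rw [← hb, Finset.sum_biUnion]
        · exact Finset.sum_congr rfl fun r' _ => (hq r').symm ▸ (hq r')
        · intro x hx y hy hxy
          simp only [Finset.disjoint_left, mem_filter, mem_univ, true_and]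
          rintro s rfl h2'
          exact hxy h2'
      have h3 : ∑ r' ∈ T, (p (A r') r' + q r')
          = ∑ x ∈ T.disjSum Ssh,
              (Sum.elim (fun r' => p (A r') r') tt x) := by
        rw [Finset.sum_disjSum]
        simp only [Sum.elim_inl, Sum.elim_inr]
        rw [Finset.sum_add_distrib, hfib]
      have hC0 : (0:ℝ) ≤ C r := add_nonneg (hSR0 r) (hp _ _)
      have hTm : ∀ r', r' ∈ T → A r' = A r ∧ C r' ≤ C r := by
        intro r' hr'; rw [hT, mem_filter] at hr'; exact hr'.2
      have hSm' : ∀ s, s ∈ Ssh → owner s ∈ T := by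
        intro s hs; rw [hSsh, mem_filter] at hs; exact hs.2
      have hpack : ∑ x ∈ T.disjSum Ssh, (Sum.elim (fun r' => p (A r') r') tt x) ≤ C r := by
        refine interval_packing _ (Sum.elim SR SS) _ (C r) hC0 ?_ ?_ ?_ ?_
        · rintro (r' | s) _
          · exact hp _ _
          · exact htt s
        · rintro (r' | s) _
          · exact hSR0 r'
          · exact hSS0 s
        · rintro (r' | s) hx
          · simp only [Sum.elim_inl]
            rw [Finset.mem_disjSum] at hx
            rcases hx with ⟨a, ha, hax⟩ | ⟨b, _, hbx⟩
            · cases hax; exact (hTm _ ha).2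
            · exact absurd hbx (by simp)
          · simp only [Sum.elim_inr]
            rw [Finset.mem_disjSum] at hx
            rcases hx with ⟨a, _, hax⟩ | ⟨b, hb, hbx⟩
            · exact absurd hax (by simp)
            · cases hbx
              have h4 := hbefore s
              have h5 := hTm _ (hSm' s hb)
              calc SS s + tt s ≤ SR (owner s) := h4
                _ ≤ C (owner s) := le_add_of_nonneg_right (hp _ _)
                _ ≤ C r := h5.2
        · rintro (r1 | s1) hx1 (r2 | s2) hx2 hne
          · rw [Finset.inl_mem_disjSum] at hx1 hx2
            simp only [Sum.elim_inl]
            exact hRR r1 r2 (fun h => hne (congrArg Sum.inl h))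
              ((hTm r1 hx1).1.trans (hTm r2 hx2).1.symm)
          · rw [Finset.inl_mem_disjSum] at hx1
            rw [Finset.inr_mem_disjSum] at hx2
            simp only [Sum.elim_inl, Sum.elim_inr]
            exact (hSRd s2 r1 ((hTm _ (hSm' s2 hx2)).1.trans (hTm r1 hx1).1.symm)).symm
          · rw [Finset.inr_mem_disjSum] at hx1
            rw [Finset.inl_mem_disjSum] at hx2
            simp only [Sum.elim_inl, Sum.elim_inr]
            exact hSRd s1 r2 ((hTm _ (hSm' s1 hx1)).1.trans (hTm r2 hx2).1.symm)
          · rw [Finset.inr_mem_disjSum] at hx1 hx2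
            simp only [Sum.elim_inr]
            exact hSSd s1 s2 (fun h => hne (congrArg Sum.inr h))
              ((hTm _ (hSm' s1 hx1)).1.trans (hTm _ (hSm' s2 hx2)).1.symm)
      calc Sm r + (p (A r) r + q r) = _ := h1
        _ ≤ _ := h2
        _ = _ := h3
        _ ≤ C r := hpack
    refine ⟨A, Sm, hSm0, ?_, ?_⟩
    · -- nonoverlap in merged schedule
      have main : ∀ r1 r2, klt r1 r2 → A r1 = A r2 →
          Sm r1 + (p (A r1) r1 + q r1) ≤ Sm r2 := by
        intro r1 r2 hk hA
        have hsub : insert r1 (pred r1) ⊆ pred r2 := by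
          intro x hx
          rw [Finset.mem_insert] at hx
          rw [hpred, mem_filter]
          rcases hx with rfl | hx
          · exact ⟨mem_univ _, hA, hk⟩
          · rw [hpred, mem_filter] at hx
            exact ⟨mem_univ _, hx.2.1.trans hA, ktrans hx.2.2 hk⟩
        calc Sm r1 + (p (A r1) r1 + q r1)
            = ∑ r' ∈ insert r1 (pred r1), (p (A r') r' + q r') := by
              rw [Finset.sum_insert (hself r1)]; ring
          _ ≤ ∑ r' ∈ pred r2, (p (A r') r' + q r') :=
              Finset.sum_le_sum_of_subset_of_nonneg hsub (fun x _ _ => hpq0 x)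
          _ = Sm r2 := rfl
      intro r1 r2 hne hA
      rcases ktot hne with hk | hk
      · exact Or.inl (main r1 r2 hk hA)
      · exact Or.inr (main r2 r1 hk hA.symm)
    · -- objective
      calc ∑ r, w r * (Sm r + (p (A r) r + q r))
          ≤ ∑ r, w r * C r := by
            refine Finset.sum_le_sum fun r _ => ?_
            exact mul_le_mul_of_nonneg_left (hcomp r) (hw r)
        _ ≤ V := hobj
  · -- backward: expand merged tasks into shuffle blocks followed by reduce
    rintro ⟨A, S, hS0, hRR, hobj⟩
    set ordS : Sh → ℕ := fun s => (Fintype.equivFin Sh s : ℕ) with hordS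
    have hordSinj : Function.Injective ordS := fun a b h =>
      (Fintype.equivFin Sh).injective (Fin.val_injective h)
    set prev : Sh → Finset Sh :=
      fun s => univ.filter (fun s' => owner s' = owner s ∧ ordS s' < ordS s) with hprev
    have hselfS : ∀ s, s ∉ prev s := by
      intro s hs
      rw [hprev, mem_filter] at hs
      exact lt_irrefl _ hs.2.2
    set SS : Sh → ℝ := fun s => S (owner s) + ∑ s' ∈ prev s, tt s' with hSSdef
    set SR : R → ℝ := fun r => S r + q r with hSRdef
    have hSSub : ∀ s, SS s + tt s ≤ S (owner s) + q (owner s) := by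
      intro s
      have hsub : insert s (prev s) ⊆ univ.filter (fun s' => owner s' = owner s) := by
        intro x hx
        rw [Finset.mem_insert] at hx
        rw [mem_filter]
        rcases hx with rfl | hx
        · exact ⟨mem_univ _, rfl⟩
        · rw [hprev, mem_filter] at hx
          exact ⟨mem_univ _, hx.2.1⟩
      calc SS s + tt s = S (owner s) + ∑ s' ∈ insert s (prev s), tt s' := by
            rw [Finset.sum_insert (hselfS s)]; simp [hSSdef]; ring
        _ ≤ S (owner s) + ∑ s' ∈ univ.filter (fun s' => owner s' = owner s), tt s' := by
            have := Finset.sum_le_sum_of_subset_of_nonneg hsub (fun x _ _ => htt x)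
            linarith
        _ = S (owner s) + q (owner s) := by rw [hq]
    have hSlb : ∀ s, S (owner s) ≤ SS s :=
      fun s => le_add_of_nonneg_right (Finset.sum_nonneg fun x _ => htt x)
    have hSSmono : ∀ s1 s2, owner s1 = owner s2 → ordS s1 < ordS s2 →
        SS s1 + tt s1 ≤ SS s2 := by
      intro s1 s2 how hlt
      have hsub : insert s1 (prev s1) ⊆ prev s2 := by
        intro x hx
        rw [Finset.mem_insert] at hx
        rw [hprev, mem_filter]
        rcases hx with rfl | hx
        · exact ⟨mem_univ _, how, hlt⟩
        · rw [hprev, mem_filter] at hx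
          exact ⟨mem_univ _, hx.2.1.trans how, hx.2.2.trans hlt⟩
      calc SS s1 + tt s1 = S (owner s1) + ∑ s' ∈ insert s1 (prev s1), tt s' := by
            rw [Finset.sum_insert (hselfS s1)]; simp [hSSdef]; ring
        _ ≤ S (owner s2) + ∑ s' ∈ prev s2, tt s' := by
            rw [how]
            have := Finset.sum_le_sum_of_subset_of_nonneg hsub (fun x _ _ => htt x)
            linarith
        _ = SS s2 := rfl
    refine ⟨A, SR, SS, fun r => add_nonneg (hS0 r) (hq0 r),
      fun s => add_nonneg (hS0 _) (Finset.sum_nonneg fun x _ => htt x), ?_, ?_, ?_, ?_, ?_⟩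
    · intro r1 r2 hne hA
      rcases hRR r1 r2 hne hA with h | h
      · left
        simp only [hSRdef]
        linarith [hq0 r2]
      · right
        simp only [hSRdef]
        linarith [hq0 r1]
    · intro s1 s2 hne hA
      by_cases how : owner s1 = owner s2
      · rcases (hordSinj.ne hne).lt_or_gt with h | h
        · exact Or.inl (hSSmono s1 s2 how h)
        · exact Or.inr (hSSmono s2 s1 how.symm h)
      · rcases hRR _ _ how hA with h | h
        · left
          calc SS s1 + tt s1 ≤ S (owner s1) + q (owner s1) := hSSub s1
            _ ≤ S (owner s2) := by linarith [hp (A (owner s1)) (owner s1)]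
            _ ≤ SS s2 := hSlb s2
        · right
          calc SS s2 + tt s2 ≤ S (owner s2) + q (owner s2) := hSSub s2
            _ ≤ S (owner s1) := by linarith [hp (A (owner s2)) (owner s2)]
            _ ≤ SS s1 := hSlb s1
    · intro s r hA
      by_cases how : owner s = r
      · subst how
        exact Or.inl (hSSub s)
      · rcases hRR _ _ how hA with h | h
        · left
          calc SS s + tt s ≤ S (owner s) + q (owner s) := hSSub s
            _ ≤ S r := by linarith [hp (A (owner s)) (owner s)]
            _ ≤ SR r := le_add_of_nonneg_right (hq0 r)
        · right
          calc SR r + p (A r) r = S r + (p (A r) r + q r) := by simp [hSRdef]; ring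
            _ ≤ S (owner s) := h
            _ ≤ SS s := hSlb s
    · intro s
      exact hSSub s
    · have heq : ∑ r, w r * (SR r + p (A r) r) = ∑ r, w r * (S r + (p (A r) r + q r)) := by
        refine Finset.sum_congr rfl fun r _ => ?_
        simp only [hSRdef]; ring
      rw [heq]; exact hobj
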